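/- For 0 < a, b < 1 let X_{a,b} ~ Beta(a, b), whose anti-mode is (a-1)/(a+b-2). Then the map (a, b) ↦ P(X_{a,b} > (a-1)/(a+b-2)) is increasing in a and decreasing in b. -/
import Mathlib

open MeasureTheory Set
open scoped ENNReal

/-- Unnormalised incomplete Beta integral: `∫_0^{min x 1} y^(a-1) (1-y)^(b-1) dy`. -/
noncomputable def betaInt (a b x : ℝ) : ℝ :=
  ∫ y in Set.Ioo (0 : ℝ) (min x 1), y ^ (a - 1) * (1 - y) ^ (b - 1)

/-- The CDF of the Beta(a, b) distribution. -/
noncomputable def betaCDF (a b x : ℝ) : ℝ :=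
  betaInt a b x / betaInt a b 1

/-- `P(X_{a,b} > (a-1)/(a+b-2))` for `X_{a,b} ~ Beta(a,b)` (the CDF is continuous, so
the probability of strictly exceeding the anti-mode is `1 - F(mode)`). -/
noncomputable def betaExceedAntimodeProb (a b : ℝ) : ℝ :=
  1 - betaCDF a b ((a - 1) / (a + b - 2))

/-- The Beta density (unnormalised). -/
noncomputable def bD (a b : ℝ) : ℝ → ℝ := fun y => y ^ (a - 1) * (1 - y) ^ (b - 1)

lemma bD_pos {a b y : ℝ} (hy0 : 0 < y) (hy1 : y < 1) : 0 < bD a b y :=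
  mul_pos (Real.rpow_pos_of_pos hy0 _) (Real.rpow_pos_of_pos (by linarith) _)

lemma bD_contOn {a b : ℝ} : ContinuousOn (bD a b) (Ioo (0:ℝ) 1) := by
  intro y hy
  have h1 : ContinuousAt (fun y : ℝ => y ^ (a-1)) y :=
    Real.continuousAt_rpow_const _ _ (Or.inl (ne_of_gt hy.1))
  have h2 : ContinuousAt (fun y : ℝ => (1 - y) ^ (b-1)) y := by
    have : ContinuousAt (fun z : ℝ => z ^ (b-1)) (1 - y) :=
      Real.continuousAt_rpow_const _ _ (Or.inl (by linarith [hy.2]))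
    exact this.comp (continuous_const.sub continuous_id).continuousAt
  exact (h1.mul h2).continuousWithinAt

lemma bD_integrable {a b : ℝ} (ha : 0 < a) (hb : 0 < b) :
    IntegrableOn (bD a b) (Ioo (0:ℝ) 1) := by
  have hsplit : Ioo (0:ℝ) 1 = Ioc (0:ℝ) 2⁻¹ ∪ Ioo (2⁻¹:ℝ) 1 :=
    (Set.Ioc_union_Ioo_eq_Ioo (by norm_num) (by norm_num)).symm
  rw [hsplit]
  apply IntegrableOn.union
  · -- near 0
    have hg : IntegrableOn (fun y : ℝ => max ((2:ℝ)⁻¹ ^ (b-1)) 1 * y ^ (a - 1))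
        (Ioc (0:ℝ) 2⁻¹) := by
      apply Integrable.const_mul
      have h0 := intervalIntegral.intervalIntegrable_rpow' (a := 0) (b := 2⁻¹) (r := a - 1)
        (by linarith)
      rw [intervalIntegrable_iff_integrableOn_Ioc_of_le (by norm_num)] at h0
      exact h0
    refine Integrable.mono' hg ((bD_contOn.mono ?_).aestronglyMeasurable measurableSet_Ioc) ?_
    · intro y hy; exact ⟨hy.1, lt_of_le_of_lt hy.2 (by norm_num)⟩
    filter_upwards [ae_restrict_mem measurableSet_Ioc] with y hy
    have hy0 : (0:ℝ) < y := hy.1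
    have hy2 : (2⁻¹:ℝ) ≤ 1 - y := by have := hy.2; linarith
    have h1y : (0:ℝ) < 1 - y := by linarith
    rw [Real.norm_eq_abs, abs_of_nonneg (bD_pos hy0 (by linarith)).le]
    show y ^ (a-1) * (1-y) ^ (b-1) ≤ _
    rw [mul_comm]
    apply mul_le_mul_of_nonneg_right _ (Real.rpow_nonneg hy0.le _)
    rcases le_or_gt b 1 with hb1 | hb1
    · exact le_trans (Real.rpow_le_rpow_of_nonpos (by norm_num) hy2 (by linarith))
        (le_max_left _ _)
    · calc (1 - y) ^ (b-1) ≤ (1:ℝ) ^ (b-1) :=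
            Real.rpow_le_rpow h1y.le (by linarith) (by linarith)
        _ = 1 := Real.one_rpow _
        _ ≤ _ := le_max_right _ _
  · -- near 1
    have hg : IntegrableOn (fun y : ℝ => max ((2:ℝ)⁻¹ ^ (a-1)) 1 * (1 - y) ^ (b - 1))
        (Ioo (2⁻¹:ℝ) 1) := by
      apply Integrable.const_mul
      have h0 := intervalIntegral.intervalIntegrable_rpow' (a := 0) (b := 2⁻¹) (r := b - 1)
        (by linarith)
      have h1 := (h0.comp_sub_left 1).symm
      rw [show (1:ℝ) - 0 = 1 by norm_num, show (1:ℝ) - 2⁻¹ = 2⁻¹ by norm_num] at h1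
      rw [intervalIntegrable_iff_integrableOn_Ioc_of_le (by norm_num)] at h1
      exact h1.mono_set Ioo_subset_Ioc_self
    refine Integrable.mono' hg ((bD_contOn.mono ?_).aestronglyMeasurable measurableSet_Ioo) ?_
    · intro y hy; exact ⟨lt_trans (by norm_num) hy.1, hy.2⟩
    filter_upwards [ae_restrict_mem measurableSet_Ioo] with y hy
    have hy0 : (2⁻¹:ℝ) ≤ y := hy.1.le
    have h1y : (0:ℝ) < 1 - y := by linarith [hy.2]
    have hy0' : (0:ℝ) < y := by linarith
    rw [Real.norm_eq_abs, abs_of_nonneg (bD_pos hy0' hy.2).le]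
    show y ^ (a-1) * (1-y) ^ (b-1) ≤ _
    apply mul_le_mul_of_nonneg_right _ (Real.rpow_nonneg h1y.le _)
    rcases le_or_gt a 1 with ha1 | ha1
    · exact le_trans (Real.rpow_le_rpow_of_nonpos (by norm_num) hy0 (by linarith))
        (le_max_left _ _)
    · calc y ^ (a-1) ≤ (1:ℝ) ^ (a-1) :=
            Real.rpow_le_rpow hy0'.le hy.2.le (by linarith)
        _ = 1 := Real.one_rpow _
        _ ≤ _ := le_max_right _ _

lemma bD_setInt_pos {a b l u : ℝ} (ha : 0 < a) (hb : 0 < b)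
    (hl : 0 ≤ l) (hlu : l < u) (hu : u ≤ 1) : 0 < ∫ y in Ioo l u, bD a b y := by
  have hsub : Ioo l u ⊆ Ioo (0:ℝ) 1 := Ioo_subset_Ioo hl hu
  have hint : IntegrableOn (bD a b) (Ioo l u) := (bD_integrable ha hb).mono_set hsub
  have hnn : 0 ≤ᵐ[volume.restrict (Ioo l u)] bD a b := by
    filter_upwards [ae_restrict_mem measurableSet_Ioo] with y hy
    exact (bD_pos (hsub hy).1 (hsub hy).2).le
  rw [setIntegral_pos_iff_support_of_nonneg_ae hnn hint]
  have hsup : Ioo l u ⊆ Function.support (bD a b) ∩ Ioo l u := fun y hy =>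
    ⟨ne_of_gt (bD_pos (hsub hy).1 (hsub hy).2), hy⟩
  calc (0:ℝ≥0∞) < volume (Ioo l u) := by
        rw [Real.volume_Ioo]; exact ENNReal.ofReal_pos.mpr (by linarith)
    _ ≤ _ := measure_mono hsup

lemma ratio_mono {h1 h2 : ℝ → ℝ} {x c : ℝ} (hx0 : 0 < x) (hx1 : x < 1)
    (int1 : IntegrableOn h1 (Ioo (0:ℝ) 1)) (int2 : IntegrableOn h2 (Ioo (0:ℝ) 1))
    (H1pos : 0 < ∫ y in Ioo (0:ℝ) x, h1 y) (T1pos : 0 < ∫ y in Ioo x 1, h1 y)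
    (H2pos : 0 < ∫ y in Ioo (0:ℝ) x, h2 y) (T2pos : 0 < ∫ y in Ioo x 1, h2 y)
    (head : ∀ y ∈ Ioo (0:ℝ) x, h2 y ≤ c * h1 y)
    (tail : ∀ y ∈ Ioo x 1, c * h1 y ≤ h2 y) :
    (∫ y in Ioo (0:ℝ) x, h2 y) / (∫ y in Ioo (0:ℝ) 1, h2 y)
      ≤ (∫ y in Ioo (0:ℝ) x, h1 y) / (∫ y in Ioo (0:ℝ) 1, h1 y) := by
  have hsub1 : Ioo (0:ℝ) x ⊆ Ioo (0:ℝ) 1 := Ioo_subset_Ioo le_rfl hx1.le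
  have hsub2 : Ioo x 1 ⊆ Ioo (0:ℝ) 1 := Ioo_subset_Ioo hx0.le le_rfl
  have split : ∀ h : ℝ → ℝ, IntegrableOn h (Ioo (0:ℝ) 1) →
      ∫ y in Ioo (0:ℝ) 1, h y = (∫ y in Ioo (0:ℝ) x, h y) + ∫ y in Ioo x 1, h y := by
    intro h hint
    have hu : Ioo (0:ℝ) x ∪ Ico x 1 = Ioo (0:ℝ) 1 := Ioo_union_Ico_eq_Ioo hx0 hx1.le
    have hdisj : Disjoint (Ioo (0:ℝ) x) (Ico x 1) := by
      rw [Set.disjoint_left]; rintro y ⟨_, h2⟩ ⟨h3, _⟩; exact absurd h3 (not_le.mpr h2)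
    rw [← hu, setIntegral_union hdisj measurableSet_Ico (hint.mono_set hsub1)
      (hint.mono_set (fun y hy => ⟨lt_of_lt_of_le hx0 hy.1, hy.2⟩)),
      integral_Ico_eq_integral_Ioo]
  rw [split h1 int1, split h2 int2]
  have hH : (∫ y in Ioo (0:ℝ) x, h2 y) ≤ c * ∫ y in Ioo (0:ℝ) x, h1 y := by
    rw [← integral_const_mul]
    exact setIntegral_mono_on (int2.mono_set hsub1) ((int1.mono_set hsub1).const_mul c)
      measurableSet_Ioo head
  have hT : c * (∫ y in Ioo x 1, h1 y) ≤ ∫ y in Ioo x 1, h2 y := by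
    rw [← integral_const_mul]
    exact setIntegral_mono_on ((int1.mono_set hsub2).const_mul c) (int2.mono_set hsub2)
      measurableSet_Ioo tail
  rw [div_le_div_iff₀ (by linarith) (by linarith)]
  nlinarith [mul_le_mul_of_nonneg_right hH T1pos.le,
    mul_le_mul_of_nonneg_left hT H1pos.le]

lemma betaInt_eq {a b x : ℝ} (hx : x ≤ 1) :
    betaInt a b x = ∫ y in Ioo (0:ℝ) x, bD a b y := by
  rw [betaInt, min_eq_left hx]; rfl

lemma betaInt_one_pos {a b : ℝ} (ha : 0 < a) (hb : 0 < b) : 0 < betaInt a b 1 := by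
  rw [betaInt_eq le_rfl]
  exact bD_setInt_pos ha hb le_rfl one_pos le_rfl

/-- `betaCDF` is monotone in `x`. -/
lemma betaCDF_mono_x {a b x x' : ℝ} (ha : 0 < a) (hb : 0 < b) (hxx : x ≤ x') :
    betaCDF a b x ≤ betaCDF a b x' := by
  unfold betaCDF
  apply div_le_div_of_nonneg_right _ (betaInt_one_pos ha hb).le
  have hsub : Ioo (0:ℝ) (min x 1) ⊆ Ioo 0 (min x' 1) :=
    Ioo_subset_Ioo le_rfl (min_le_min hxx le_rfl)
  have hsub' : Ioo (0:ℝ) (min x' 1) ⊆ Ioo 0 1 :=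
    Ioo_subset_Ioo le_rfl (min_le_right _ _)
  show (∫ y in Ioo (0:ℝ) (min x 1), bD a b y) ≤ ∫ y in Ioo (0:ℝ) (min x' 1), bD a b y
  refine setIntegral_mono_set ((bD_integrable ha hb).mono_set hsub') ?_
    (HasSubset.Subset.eventuallyLE hsub)
  filter_upwards [ae_restrict_mem measurableSet_Ioo] with y hy
  exact (bD_pos hy.1 (lt_of_lt_of_le hy.2 (min_le_right _ _))).le

/-- `betaCDF` is antitone in `a` for fixed `x ∈ (0,1)`. -/
lemma betaCDF_anti_a {a₁ a₂ b x : ℝ} (ha₁ : 0 < a₁) (ha : a₁ ≤ a₂) (hb : 0 < b)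
    (hx0 : 0 < x) (hx1 : x < 1) : betaCDF a₂ b x ≤ betaCDF a₁ b x := by
  unfold betaCDF
  rw [betaInt_eq hx1.le, betaInt_eq hx1.le, betaInt_eq (le_refl (1:ℝ)),
    betaInt_eq (le_refl (1:ℝ))]
  refine ratio_mono (c := x ^ (a₂ - a₁)) hx0 hx1 (bD_integrable ha₁ hb) (bD_integrable (lt_of_lt_of_le ha₁ ha) hb)
    (bD_setInt_pos ha₁ hb le_rfl hx0 hx1.le)
    (bD_setInt_pos ha₁ hb hx0.le hx1 le_rfl)
    (bD_setInt_pos (lt_of_lt_of_le ha₁ ha) hb le_rfl hx0 hx1.le)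
    (bD_setInt_pos (lt_of_lt_of_le ha₁ ha) hb hx0.le hx1 le_rfl)
    (fun y hy => ?_) (fun y hy => ?_)
  · have hy0 : (0:ℝ) < y := hy.1
    have key : y ^ (a₂ - 1) ≤ x ^ (a₂ - a₁) * y ^ (a₁ - 1) := by
      rw [show a₂ - 1 = (a₂ - a₁) + (a₁ - 1) by ring, Real.rpow_add hy0]
      exact mul_le_mul_of_nonneg_right
        (Real.rpow_le_rpow hy0.le hy.2.le (by linarith)) (Real.rpow_nonneg hy0.le _)
    calc bD a₂ b y = y ^ (a₂ - 1) * (1 - y) ^ (b - 1) := rfl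
      _ ≤ (x ^ (a₂ - a₁) * y ^ (a₁ - 1)) * (1 - y) ^ (b - 1) :=
          mul_le_mul_of_nonneg_right key
            (Real.rpow_nonneg (by linarith [hy.2, hx1] : (0:ℝ) ≤ 1 - y) _)
      _ = x ^ (a₂ - a₁) * bD a₁ b y := by rw [bD]; ring
  · have hy0 : (0:ℝ) < y := lt_trans hx0 hy.1
    have key : x ^ (a₂ - a₁) * y ^ (a₁ - 1) ≤ y ^ (a₂ - 1) := by
      rw [show a₂ - 1 = (a₂ - a₁) + (a₁ - 1) by ring, Real.rpow_add hy0]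
      exact mul_le_mul_of_nonneg_right
        (Real.rpow_le_rpow hx0.le hy.1.le (by linarith)) (Real.rpow_nonneg hy0.le _)
    calc x ^ (a₂ - a₁) * bD a₁ b y
        = (x ^ (a₂ - a₁) * y ^ (a₁ - 1)) * (1 - y) ^ (b - 1) := by rw [bD]; ring
      _ ≤ y ^ (a₂ - 1) * (1 - y) ^ (b - 1) :=
          mul_le_mul_of_nonneg_right key
            (Real.rpow_nonneg (by linarith [hy.2] : (0:ℝ) ≤ 1 - y) _)
      _ = bD a₂ b y := rfl

/-- `betaCDF` is monotone in `b` for fixed `x ∈ (0,1)`. -/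
lemma betaCDF_mono_b {a b₁ b₂ x : ℝ} (ha : 0 < a) (hb₁ : 0 < b₁) (hb : b₁ ≤ b₂)
    (hx0 : 0 < x) (hx1 : x < 1) : betaCDF a b₁ x ≤ betaCDF a b₂ x := by
  unfold betaCDF
  rw [betaInt_eq hx1.le, betaInt_eq hx1.le, betaInt_eq (le_refl (1:ℝ)),
    betaInt_eq (le_refl (1:ℝ))]
  refine ratio_mono (c := (1 - x) ^ (b₁ - b₂)) hx0 hx1 (bD_integrable ha (lt_of_lt_of_le hb₁ hb)) (bD_integrable ha hb₁)
    (bD_setInt_pos ha (lt_of_lt_of_le hb₁ hb) le_rfl hx0 hx1.le)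
    (bD_setInt_pos ha (lt_of_lt_of_le hb₁ hb) hx0.le hx1 le_rfl)
    (bD_setInt_pos ha hb₁ le_rfl hx0 hx1.le)
    (bD_setInt_pos ha hb₁ hx0.le hx1 le_rfl)
    (fun y hy => ?_) (fun y hy => ?_)
  · have hy0 : (0:ℝ) < y := hy.1
    have h1y : (0:ℝ) < 1 - y := by linarith [hy.2, hx1]
    have h1x : (0:ℝ) < 1 - x := by linarith
    have key : (1 - y) ^ (b₁ - 1) ≤ (1 - x) ^ (b₁ - b₂) * (1 - y) ^ (b₂ - 1) := by
      rw [show b₁ - 1 = (b₁ - b₂) + (b₂ - 1) by ring, Real.rpow_add h1y]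
      exact mul_le_mul_of_nonneg_right
        (Real.rpow_le_rpow_of_nonpos h1x (by linarith [hy.2]) (by linarith))
        (Real.rpow_nonneg h1y.le _)
    calc bD a b₁ y = y ^ (a - 1) * (1 - y) ^ (b₁ - 1) := rfl
      _ ≤ y ^ (a - 1) * ((1 - x) ^ (b₁ - b₂) * (1 - y) ^ (b₂ - 1)) :=
          mul_le_mul_of_nonneg_left key (Real.rpow_nonneg hy0.le _)
      _ = (1 - x) ^ (b₁ - b₂) * bD a b₂ y := by rw [bD]; ring
  · have hy0 : (0:ℝ) < y := lt_trans hx0 hy.1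
    have h1y : (0:ℝ) < 1 - y := by linarith [hy.2]
    have key : (1 - x) ^ (b₁ - b₂) * (1 - y) ^ (b₂ - 1) ≤ (1 - y) ^ (b₁ - 1) := by
      rw [show b₁ - 1 = (b₁ - b₂) + (b₂ - 1) by ring, Real.rpow_add h1y]
      exact mul_le_mul_of_nonneg_right
        (Real.rpow_le_rpow_of_nonpos h1y (by linarith [hy.1]) (by linarith))
        (Real.rpow_nonneg h1y.le _)
    calc (1 - x) ^ (b₁ - b₂) * bD a b₂ y
        = y ^ (a - 1) * ((1 - x) ^ (b₁ - b₂) * (1 - y) ^ (b₂ - 1)) := by rw [bD]; ring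
      _ ≤ y ^ (a - 1) * (1 - y) ^ (b₁ - 1) :=
          mul_le_mul_of_nonneg_left key (Real.rpow_nonneg hy0.le _)
      _ = bD a b₁ y := rfl

lemma antimode_eq (a b : ℝ) : (a - 1) / (a + b - 2) = (1 - a) / (2 - a - b) := by
  rw [← neg_div_neg_eq]; congr 1 <;> ring

lemma antimode_mem {a b : ℝ} (ha0 : 0 < a) (ha1 : a < 1) (hb0 : 0 < b) (hb1 : b < 1) :
    (a - 1) / (a + b - 2) ∈ Ioo (0:ℝ) 1 := by
  rw [antimode_eq]
  constructor
  · exact div_pos (by linarith) (by linarith)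
  · rw [div_lt_one (by linarith)]; linarith

/-- Corollary 12 (anti-modes): for `0 < a, b < 1`, `(a,b) ↦ P(X_{a,b} > antimode)` is
increasing in `a` and decreasing in `b`. -/
theorem beta_exceed_antimode_monotone :
    (∀ b a₁ a₂ : ℝ, 0 < b → b < 1 → 0 < a₁ → a₁ ≤ a₂ → a₂ < 1 →
      betaExceedAntimodeProb a₁ b ≤ betaExceedAntimodeProb a₂ b) ∧
    (∀ a b₁ b₂ : ℝ, 0 < a → a < 1 → 0 < b₁ → b₁ ≤ b₂ → b₂ < 1 →
      betaExceedAntimodeProb a b₂ ≤ betaExceedAntimodeProb a b₁) := by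
  constructor
  · intro b a₁ a₂ hb0 hb1 ha₁ haa ha₂
    have ha₁1 : a₁ < 1 := lt_of_le_of_lt haa ha₂
    have ha₂0 : 0 < a₂ := lt_of_lt_of_le ha₁ haa
    unfold betaExceedAntimodeProb
    apply sub_le_sub_left
    have hm₁ := antimode_mem ha₁ ha₁1 hb0 hb1
    have hmono : (a₂ - 1) / (a₂ + b - 2) ≤ (a₁ - 1) / (a₁ + b - 2) := by
      rw [antimode_eq, antimode_eq, div_le_div_iff₀ (by linarith) (by linarith)]
      nlinarith
    calc betaCDF a₂ b ((a₂ - 1) / (a₂ + b - 2))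
        ≤ betaCDF a₂ b ((a₁ - 1) / (a₁ + b - 2)) := betaCDF_mono_x ha₂0 hb0 hmono
      _ ≤ betaCDF a₁ b ((a₁ - 1) / (a₁ + b - 2)) :=
          betaCDF_anti_a ha₁ haa hb0 hm₁.1 hm₁.2
  · intro a b₁ b₂ ha0 ha1 hb₁ hbb hb₂
    have hb₁1 : b₁ < 1 := lt_of_le_of_lt hbb hb₂
    have hb₂0 : 0 < b₂ := lt_of_lt_of_le hb₁ hbb
    unfold betaExceedAntimodeProb
    apply sub_le_sub_left
    have hm₁ := antimode_mem ha0 ha1 hb₁ hb₁1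
    have hmono : (a - 1) / (a + b₁ - 2) ≤ (a - 1) / (a + b₂ - 2) := by
      rw [antimode_eq, antimode_eq, div_le_div_iff₀ (by linarith) (by linarith)]
      nlinarith
    calc betaCDF a b₁ ((a - 1) / (a + b₁ - 2))
        ≤ betaCDF a b₂ ((a - 1) / (a + b₁ - 2)) :=
          betaCDF_mono_b ha0 hb₁ hbb hm₁.1 hm₁.2
      _ ≤ betaCDF a b₂ ((a - 1) / (a + b₂ - 2)) := betaCDF_mono_x ha0 hb₂0 hmono
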